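/- An observable B is commuting (B_yB_{y'} = B_{y'}B_y for all y, y') if and only if there exists an atomic observable A and an instrument measuring A such that B = (B|A). -/

import Mathlib

open scoped ComplexOrder

open Matrix BigOperators

/-- An effect on a finite-dimensional Hilbert space: `0 ≤ a ≤ I`. -/
def IsEffect {n : ℕ} (a : Matrix (Fin n) (Fin n) ℂ) : Prop :=
  a.PosSemidef ∧ (1 - a).PosSemidef

/-- An atomic effect: a rank-one (orthogonal) projection. -/
def IsAtomicEffect {n : ℕ} (a : Matrix (Fin n) (Fin n) ℂ) : Prop :=
  a.IsHermitian ∧ a * a = a ∧ a.rank = 1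

variable {n : ℕ}


lemma mulVec_vecMulVec' (u w x : Fin n → ℂ) :
    (vecMulVec u w) *ᵥ x = (w ⬝ᵥ x) • u := by
  funext i
  simp [vecMulVec_apply, mulVec, dotProduct, Finset.mul_sum, mul_comm, mul_assoc, mul_left_comm]

lemma mul_vecMulVec' (M : Matrix (Fin n) (Fin n) ℂ) (u w : Fin n → ℂ) :
    M * vecMulVec u w = vecMulVec (M *ᵥ u) w := by
  ext i j
  simp [vecMulVec_apply, mul_apply, mulVec, dotProduct, Finset.sum_mul, mul_assoc]

lemma vecMulVec_mul' (M : Matrix (Fin n) (Fin n) ℂ) (u w : Fin n → ℂ) :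
    vecMulVec u w * M = vecMulVec u (w ᵥ* M) := by
  ext i j
  simp [vecMulVec_apply, mul_apply, vecMul, dotProduct, Finset.mul_sum, mul_assoc]

lemma vecMulVec_smul_left (c : ℂ) (u w : Fin n → ℂ) :
    vecMulVec (c • u) w = c • vecMulVec u w := by
  ext i j; simp [vecMulVec_apply, mul_assoc]

lemma eq_of_forall_mulVec_eq (M N : Matrix (Fin n) (Fin n) ℂ)
    (h : ∀ x, M *ᵥ x = N *ᵥ x) : M = N := by
  ext i j
  have := congrFun (h (Pi.single j 1)) i
  simpa [mulVec_single] using this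

lemma rank_vecMulVec_star (v : Fin n → ℂ) (hv : v ≠ 0) :
    (vecMulVec v (star v)).rank = 1 := by
  have hdv : star v ⬝ᵥ v ≠ 0 := by
    simpa [dotProduct_star_self_eq_zero] using hv
  have hrange : LinearMap.range (vecMulVec v (star v)).mulVecLin = Submodule.span ℂ {v} := by
    apply le_antisymm
    · rintro y ⟨x, rfl⟩
      rw [mulVecLin_apply, mulVec_vecMulVec']
      exact Submodule.smul_mem _ _ (Submodule.mem_span_singleton_self v)
    · rw [Submodule.span_singleton_le_iff_mem]
      refine ⟨(star v ⬝ᵥ v)⁻¹ • v, ?_⟩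
      rw [mulVecLin_apply, mulVec_vecMulVec', dotProduct_smul, smul_eq_mul,
        inv_mul_cancel₀ hdv, one_smul]
  rw [Matrix.rank, hrange]
  exact finrank_span_singleton hv

lemma sandwich_scalar (A M : Matrix (Fin n) (Fin n) ℂ)
    (hrank : A.rank = 1) (hidem : A * A = A) (hM : M = A * M * A) :
    ∃ c : ℂ, M = c • A := by
  have h1 : Module.finrank ℂ (LinearMap.range A.mulVecLin) = 1 := hrank
  obtain ⟨v, hv0, hspan⟩ := finrank_eq_one_iff'.mp h1
  obtain ⟨u, hu⟩ := v.2
  have hAv : A *ᵥ (v : Fin n → ℂ) = (v : Fin n → ℂ) := by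
    rw [← hu, mulVecLin_apply, mulVec_mulVec, hidem]
  have hMvmem : M *ᵥ (v : Fin n → ℂ) ∈ LinearMap.range A.mulVecLin := by
    rw [hM]
    exact ⟨(M * A) *ᵥ (v : Fin n → ℂ), by rw [mulVecLin_apply, mulVec_mulVec, Matrix.mul_assoc]⟩
  obtain ⟨c, hc⟩ := hspan ⟨M *ᵥ (v : Fin n → ℂ), hMvmem⟩
  have hcv : M *ᵥ (v : Fin n → ℂ) = c • (v : Fin n → ℂ) := by
    have := congrArg (Subtype.val) hc
    simpa using this.symm
  refine ⟨c, eq_of_forall_mulVec_eq _ _ fun x => ?_⟩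
  obtain ⟨a, ha⟩ := hspan ⟨A *ᵥ x, ⟨x, rfl⟩⟩
  have hax : A *ᵥ x = a • (v : Fin n → ℂ) := by
    have := congrArg (Subtype.val) ha
    simpa using this.symm
  have : M *ᵥ x = A *ᵥ (M *ᵥ (A *ᵥ x)) := by
    conv_lhs => rw [hM]
    simp [← mulVec_mulVec]
  rw [this, hax, mulVec_smul, hcv, mulVec_smul, mulVec_smul, hAv, smul_mulVec, hax,
    smul_smul, smul_smul, mul_comm]

lemma dotProduct_sum' {ι : Type*} (s : Finset ι) (v : Fin n → ℂ) (f : ι → Fin n → ℂ) :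
    v ⬝ᵥ (∑ z ∈ s, f z) = ∑ z ∈ s, v ⬝ᵥ f z := by
  simp only [dotProduct, Finset.sum_apply, Finset.mul_sum]
  exact Finset.sum_comm

lemma sum_mulVec' {ι : Type*} (s : Finset ι) (A : ι → Matrix (Fin n) (Fin n) ℂ)
    (u : Fin n → ℂ) : (∑ z ∈ s, A z) *ᵥ u = ∑ z ∈ s, A z *ᵥ u := by
  ext i
  simp [mulVec, dotProduct, Matrix.sum_apply, Finset.sum_mul, Finset.sum_apply]
  exact Finset.sum_comm

lemma atomic_posSemidef {A : Matrix (Fin n) (Fin n) ℂ} (h : IsAtomicEffect A) :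
    A.PosSemidef := by
  have := Matrix.posSemidef_conjTranspose_mul_self A
  rwa [h.1.eq, h.2.1] at this

lemma conditioned_scalar (A M : Matrix (Fin n) (Fin n) ℂ) (hA : IsAtomicEffect A)
    (hM : M.PosSemidef) (hAM : (A - M).PosSemidef) : ∃ c : ℂ, M = c • A := by
  obtain ⟨hherm, hidem, hrank⟩ := hA
  have hMA : M * (1 - A) = 0 := by
    apply eq_of_forall_mulVec_eq
    intro x
    set u := (1 - A) *ᵥ x with hu
    have h0 : A *ᵥ u = 0 := by
      rw [hu, mulVec_mulVec, Matrix.mul_sub, mul_one, hidem, sub_self, zero_mulVec]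
    have h1 : 0 ≤ star u ⬝ᵥ M *ᵥ u := hM.dotProduct_mulVec_nonneg u
    have h2 : 0 ≤ star u ⬝ᵥ (A - M) *ᵥ u := hAM.dotProduct_mulVec_nonneg u
    rw [sub_mulVec, dotProduct_sub, h0, dotProduct_zero, zero_sub] at h2
    have hz : star u ⬝ᵥ M *ᵥ u = 0 := le_antisymm (neg_nonneg.mp h2) h1
    have hMu : M *ᵥ u = 0 := (hM.dotProduct_mulVec_zero_iff u).mp hz
    rw [← mulVec_mulVec, ← hu, hMu, zero_mulVec]
  have hMA' : M = M * A := by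
    have h : M * 1 - M * A = 0 := by rw [← Matrix.mul_sub, hMA]
    rw [mul_one] at h
    exact sub_eq_zero.mp h
  have hAM' : M = A * M := by
    have h := congrArg conjTranspose hMA'
    rwa [conjTranspose_mul, hherm.eq, hM.1.eq] at h
  exact sandwich_scalar A M hrank hidem (by rw [← hAM', ← hMA'])

lemma atomic_orthogonal (A : Fin n → Matrix (Fin n) (Fin n) ℂ)
    (hA : ∀ x, IsAtomicEffect (A x)) (hsum : ∑ x, A x = 1)
    {x x' : Fin n} (hne : x' ≠ x) : A x' * A x = 0 := by
  apply eq_of_forall_mulVec_eq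
  intro w
  set u := A x *ᵥ w with hu
  have hxu : A x *ᵥ u = u := by rw [hu, mulVec_mulVec, (hA x).2.1]
  have hkey : ∑ z ∈ Finset.univ.erase x, star u ⬝ᵥ A z *ᵥ u = 0 := by
    have h1 : ∑ z, star u ⬝ᵥ A z *ᵥ u = star u ⬝ᵥ u := by
      rw [← dotProduct_sum', ← sum_mulVec', hsum, one_mulVec]
    rw [← Finset.add_sum_erase _ _ (Finset.mem_univ x), hxu] at h1
    exact add_eq_left.mp h1
  have hz : star u ⬝ᵥ A x' *ᵥ u = 0 := by
    have hnn : ∀ z ∈ Finset.univ.erase x, 0 ≤ star u ⬝ᵥ A z *ᵥ u :=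
      fun z _ => (atomic_posSemidef (hA z)).dotProduct_mulVec_nonneg u
    exact (Finset.sum_eq_zero_iff_of_nonneg hnn).mp hkey x' (Finset.mem_erase.mpr ⟨hne, Finset.mem_univ x'⟩)
  have := ((atomic_posSemidef (hA x')).dotProduct_mulVec_zero_iff u).mp hz
  rw [← mulVec_mulVec, ← hu, this, zero_mulVec]

lemma diag_commute {Y : Type*} [Fintype Y]
    (A : Fin n → Matrix (Fin n) (Fin n) ℂ)
    (hAatom : ∀ x, IsAtomicEffect (A x)) (hAsum : ∑ x, A x = 1)
    (c : Fin n → Y → ℂ) (B : Y → Matrix (Fin n) (Fin n) ℂ)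
    (hrep : ∀ y, B y = ∑ x, c x y • A x) :
    ∀ y y', B y * B y' = B y' * B y := by
  have key : ∀ f g : Fin n → ℂ,
      (∑ x, f x • A x) * (∑ x, g x • A x) = ∑ x, (f x * g x) • A x := by
    intro f g
    rw [Finset.sum_mul_sum]
    refine Finset.sum_congr rfl fun x _ => ?_
    rw [Finset.sum_eq_single x]
    · rw [smul_mul_smul_comm, (hAatom x).2.1]
    · intro x' _ hx'
      rw [smul_mul_smul_comm, atomic_orthogonal A hAatom hAsum hx'.symm, smul_zero]
    · exact fun h => absurd (Finset.mem_univ x) h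
  intro y y'
  rw [hrep y, hrep y', key, key]
  refine Finset.sum_congr rfl fun x _ => ?_
  rw [mul_comm]

set_option maxHeartbeats 1000000 in
open Module.End in
lemma forward_diagonalization {Y : Type*} [Fintype Y]
    (B : Y → Matrix (Fin n) (Fin n) ℂ)
    (hB : ∀ y, (B y).IsHermitian)
    (hcomm : ∀ y y', B y * B y' = B y' * B y) :
    ∃ (v : Fin n → (Fin n → ℂ)) (μ : Fin n → Y → ℂ),
      (∀ x, star (v x) ⬝ᵥ v x = 1) ∧ (∀ x, v x ≠ 0) ∧
      (∀ x y, B y *ᵥ v x = μ x y • v x) ∧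
      (∑ x, vecMulVec (v x) (star (v x)) = 1) := by
  classical
  set T : Y → (EuclideanSpace ℂ (Fin n) →ₗ[ℂ] EuclideanSpace ℂ (Fin n)) :=
    fun y => Matrix.toEuclideanLin (B y) with hT
  have hsym : ∀ y, (T y).IsSymmetric := fun y => Matrix.isHermitian_iff_isSymmetric.mp (hB y)
  have hmul : ∀ y y', T y * T y' = Matrix.toEuclideanLin (B y * B y') := by
    intro y y'
    apply LinearMap.ext
    intro w
    simp only [hT, Module.End.mul_apply, Matrix.toEuclideanLin_apply, Equiv.apply_symm_apply,
      Matrix.mulVec_mulVec]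
  have hcomm' : Pairwise (Function.onFun Commute T) := by
    intro y y' _
    show T y * T y' = T y' * T y
    rw [hmul, hmul, hcomm]
  set V : (Y → ℂ) → Submodule ℂ (EuclideanSpace ℂ (Fin n)) := fun χ => ⨅ y, eigenspace (T y) (χ y) with hVdef
  have hV' := LinearMap.IsSymmetric.orthogonalFamily_iInf_eigenspaces hsym
  have htop : ⨆ χ : Y → ℂ, V χ = ⊤ :=
    LinearMap.IsSymmetric.iSup_iInf_eq_top_of_commute hsym hcomm'
  have hfin : Finite {χ : Y → ℂ // V χ ≠ ⊥} := by
    have hu : ∀ χ : {χ : Y → ℂ // V χ ≠ ⊥}, ∃ u : EuclideanSpace ℂ (Fin n), u ∈ V χ.1 ∧ u ≠ 0 :=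
      fun χ => Submodule.exists_mem_ne_zero_of_ne_bot χ.2
    choose u hu1 hu2 using hu
    have hind : LinearIndependent ℂ u := by
      apply linearIndependent_of_ne_zero_of_inner_eq_zero hu2
      intro χ χ' hne
      exact hV' (fun h => hne (Subtype.ext h)) ⟨u χ, hu1 χ⟩ ⟨u χ', hu1 χ'⟩
    exact hind.finite
  haveI := hfin
  haveI : Fintype {χ : Y → ℂ // V χ ≠ ⊥} := Fintype.ofFinite _
  set W : {χ : Y → ℂ // V χ ≠ ⊥} → Submodule ℂ (EuclideanSpace ℂ (Fin n)) := fun χ => V χ.1 with hWdef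
  have hW' := hV'.comp (Subtype.val_injective :
    Function.Injective (Subtype.val : {χ : Y → ℂ // V χ ≠ ⊥} → (Y → ℂ)))
  have hWtop : ⨆ χ, W χ = ⊤ := by
    apply le_antisymm le_top
    rw [← htop]
    apply iSup_le
    intro χ
    by_cases h : V χ = ⊥
    · rw [h]; exact bot_le
    · exact le_iSup W ⟨χ, h⟩
  have hVint : DirectSum.IsInternal W :=
    hW'.isInternal_iff.mpr (by rw [hWtop, Submodule.top_orthogonal_eq_bot])
  have hn : Module.finrank ℂ (EuclideanSpace ℂ (Fin n)) = n := by simp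
  set b := hVint.subordinateOrthonormalBasis hn hW' with hb
  set L := WithLp.linearEquiv 2 ℂ (Fin n → ℂ) with hL
  set v : Fin n → (Fin n → ℂ) := fun x => L (b x) with hv
  have hinner : ∀ (uu : EuclideanSpace ℂ (Fin n)) (w : Fin n → ℂ), (inner ℂ uu (L.symm w) : ℂ) = star (L uu) ⬝ᵥ w := by
    intro uu w
    simp [PiLp.inner_apply, RCLike.inner_apply, dotProduct, hL, mul_comm]
  have hunit : ∀ x, star (v x) ⬝ᵥ v x = 1 := by
    intro x
    have h1 : (inner ℂ (b x) (b x) : ℂ) = 1 := by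
      simpa using orthonormal_iff_ite.mp b.orthonormal x x
    have h2 := hinner (b x) (v x)
    rw [hv] at h2
    simp only [LinearEquiv.symm_apply_apply] at h2
    rw [← h2, h1]
  have hvne : ∀ x, v x ≠ 0 := by
    intro x h
    have := hunit x
    rw [h] at this
    simp at this
  set μ : Fin n → Y → ℂ := fun x => (hVint.subordinateOrthonormalBasisIndex hn x hW').val
    with hμ
  have heig : ∀ x y, B y *ᵥ v x = μ x y • v x := by
    intro x y
    have hmem : b x ∈ W (hVint.subordinateOrthonormalBasisIndex hn x hW') :=
      hVint.subordinateOrthonormalBasis_subordinate hn x hW'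
    have h2 : T y (b x) = μ x y • b x :=
      mem_eigenspace_iff.mp ((Submodule.mem_iInf _).mp hmem y)
    have h3 := congrArg L h2
    rw [_root_.map_smul] at h3
    rw [hv, ← h3, hT]
    simp [Matrix.toEuclideanLin_apply, hL]
  refine ⟨v, μ, hunit, hvne, heig, ?_⟩
  apply eq_of_forall_mulVec_eq
  intro w
  rw [sum_mulVec', one_mulVec]
  have hrepr := b.sum_repr' (L.symm w)
  have h4 := congrArg L hrepr
  rw [map_sum] at h4
  simp only [_root_.map_smul, LinearEquiv.apply_symm_apply] at h4
  calc ∑ x, vecMulVec (v x) (star (v x)) *ᵥ w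
      = ∑ x, (inner ℂ (b x) (L.symm w) : ℂ) • v x := by
        refine Finset.sum_congr rfl fun x _ => ?_
        rw [mulVec_vecMulVec', hinner]
    _ = w := h4

/-- an observable `B = {B_y}` is commuting iff there exist an atomic
observable `A = {A_x}` and an instrument measuring `A` (represented by its dual maps
`D_x`, which are positive and satisfy `D_x(I) = A_x`) such that `B = (B|A)`, i.e.
`B_y = Σ_x D_x(B_y)` for all `y`. -/
theorem commuting_iff_conditioned_by_atomic {n : ℕ} {Y : Type*} [Fintype Y]
    (B : Y → Matrix (Fin n) (Fin n) ℂ)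
    (hB : ∀ y, IsEffect (B y)) (hBsum : ∑ y, B y = 1) :
    (∀ y y', B y * B y' = B y' * B y) ↔
    ∃ (A : Fin n → Matrix (Fin n) (Fin n) ℂ)
      (D : Fin n → (Matrix (Fin n) (Fin n) ℂ →ₗ[ℂ] Matrix (Fin n) (Fin n) ℂ)),
      (∀ x, IsAtomicEffect (A x)) ∧ (∑ x, A x = 1) ∧
      (∀ x, ∀ M : Matrix (Fin n) (Fin n) ℂ, M.PosSemidef → (D x M).PosSemidef) ∧
      (∀ x, D x 1 = A x) ∧
      (∀ y, B y = ∑ x, D x (B y)) := by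
  constructor
  · intro hcomm
    obtain ⟨v, μ, hunit, hvne, heig, hsum⟩ :=
      forward_diagonalization B (fun y => (hB y).1.1) hcomm
    set A : Fin n → Matrix (Fin n) (Fin n) ℂ := fun x => vecMulVec (v x) (star (v x)) with hA
    have hherm : ∀ x, (A x).IsHermitian := by
      intro x
      ext i j
      simp [hA, conjTranspose_apply, vecMulVec_apply, mul_comm]
    have hidem : ∀ x, A x * A x = A x := by
      intro x
      rw [hA]
      rw [mul_vecMulVec', mulVec_vecMulVec', hunit, one_smul]
    set D : Fin n → (Matrix (Fin n) (Fin n) ℂ →ₗ[ℂ] Matrix (Fin n) (Fin n) ℂ) :=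
      fun x => (LinearMap.mulLeft ℂ (A x)).comp (LinearMap.mulRight ℂ (A x)) with hD
    have hDapp : ∀ x M, D x M = A x * M * A x := by
      intro x M
      simp [hD, LinearMap.mulLeft_apply, LinearMap.mulRight_apply, Matrix.mul_assoc]
    have hBA : ∀ x y, B y * A x = μ x y • A x := by
      intro x y
      rw [hA, mul_vecMulVec', heig, vecMulVec_smul_left]
    refine ⟨A, D, fun x => ⟨hherm x, hidem x, rank_vecMulVec_star (v x) (hvne x)⟩, hsum,
      ?_, ?_, ?_⟩
    · intro x M hM
      rw [hDapp]
      have := hM.mul_mul_conjTranspose_same (A x)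
      rwa [(hherm x).eq] at this
    · intro x
      rw [hDapp, mul_one, hidem]
    · intro y
      have hterm : ∀ x, D x (B y) = B y * A x := by
        intro x
        rw [hDapp, Matrix.mul_assoc, hBA, mul_smul_comm, hidem, ← hBA]
      calc B y = B y * 1 := (mul_one _).symm
        _ = B y * ∑ x, A x := by rw [hsum]
        _ = ∑ x, B y * A x := by rw [Finset.mul_sum]
        _ = ∑ x, D x (B y) := by
            exact Finset.sum_congr rfl fun x _ => (hterm x).symm
  · rintro ⟨A, D, hAatom, hAsum, hDpos, hD1, hBcond⟩
    have hscal : ∀ x y, ∃ c : ℂ, D x (B y) = c • A x := by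
      intro x y
      refine conditioned_scalar (A x) (D x (B y)) (hAatom x) (hDpos x _ (hB y).1) ?_
      have := hDpos x (1 - B y) (hB y).2
      rwa [map_sub, hD1] at this
    choose c hc using hscal
    refine diag_commute A hAatom hAsum (fun x y => c x y) B ?_
    intro y
    rw [hBcond y]
    exact Finset.sum_congr rfl fun x _ => hc x y
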